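/- Every submodule M of (ℤ/dℤ)^n of rank r admits a free basis f₁,…,fₙ of (ℤ/dℤ)^n and elements b₁,…,b_r of ℤ/dℤ with b₁ ∣ b₂ ∣ ⋯ ∣ b_r such that (b₁·f₁, …, b_r·f_r) is a generating family of M. -/

import Mathlib

open Submodule Set

lemma pairFix {F : Type*} [AddCommGroup F] {n : ℕ}
    (e : Module.Basis (Fin n) ℤ F) (a : Fin n → ℤ) (i j : Fin n) (hij : i ≠ j)
    (hai : a i ≠ 0) :
    ∃ (e' : Module.Basis (Fin n) ℤ F),
      Submodule.span ℤ (Set.range fun k =>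
          (Function.update (Function.update a i (Int.gcd (a i) (a j)))
            j ((a i / Int.gcd (a i) (a j)) * a j)) k • e' k)
        = Submodule.span ℤ (Set.range fun k => a k • e k) := by
  set g : ℤ := (Int.gcd (a i) (a j) : ℤ) with hg
  have hgdvd₁ : g ∣ a i := Int.gcd_dvd_left _ _
  have hgdvd₂ : g ∣ a j := Int.gcd_dvd_right _ _
  have hgne : g ≠ 0 := by
    have : Int.gcd (a i) (a j) ≠ 0 := fun h => hai (Int.gcd_eq_zero_iff.mp h).1
    rw [hg]; exact_mod_cast this
  set x : ℤ := Int.gcdA (a i) (a j) with hx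
  set y : ℤ := Int.gcdB (a i) (a j) with hy
  have hbez : a i * x + a j * y = g := (Int.gcd_eq_gcd_ab (a i) (a j)).symm
  set a₀ : ℤ := a i / g with ha₀
  set b₀ : ℤ := a j / g with hb₀
  have ha₀g : g * a₀ = a i := Int.mul_ediv_cancel' hgdvd₁
  have hb₀g : g * b₀ = a j := Int.mul_ediv_cancel' hgdvd₂
  have hbez' : a₀ * x + b₀ * y = 1 := by
    have : g * (a₀ * x + b₀ * y) = g * 1 := by
      rw [mul_one, mul_add, ← mul_assoc, ← mul_assoc, ha₀g, hb₀g]; linarith [hbez]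
    exact mul_left_cancel₀ hgne this
  -- new basis vectors
  set fi : F := a₀ • e i + b₀ • e j with hfi
  set fj : F := (-y) • e i + x • e j with hfj
  set ui : F := x • e i + (-b₀) • e j with hui
  set uj : F := y • e i + a₀ • e j with huj
  set fv : Fin n → F := Function.update (Function.update (⇑e) i fi) j fj with hfv
  set uv : Fin n → F := Function.update (Function.update (⇑e) i ui) j uj with huv
  have hfvi : fv i = fi := by simp [hfv, Function.update_of_ne hij, Function.update_self]
  have hfvj : fv j = fj := by simp [hfv]
  have hfvk : ∀ k, k ≠ i → k ≠ j → fv k = e k := by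
    intro k h1 h2; simp [hfv, Function.update_of_ne h2, Function.update_of_ne h1]
  have huvi : uv i = ui := by simp [huv, Function.update_of_ne hij]
  have huvj : uv j = uj := by simp [huv]
  have huvk : ∀ k, k ≠ i → k ≠ j → uv k = e k := by
    intro k h1 h2; simp [huv, Function.update_of_ne h2, Function.update_of_ne h1]
  set T := e.constr ℤ fv with hT
  set U := e.constr ℤ uv with hU
  have hUT : ∀ k, U (T (e k)) = e k := by
    intro k
    rw [hT, e.constr_basis]
    by_cases h1 : k = i
    · subst h1
      rw [hfvi, hfi, map_add, map_smul, map_smul, hU, e.constr_basis, e.constr_basis,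
        huvi, huvj, hui, huj]
      match_scalars <;> linarith [hbez']
    by_cases h2 : k = j
    · subst h2
      rw [hfvj, hfj, map_add, map_smul, map_smul, hU, e.constr_basis, e.constr_basis,
        huvi, huvj, hui, huj]
      match_scalars <;> linarith [hbez']
    · rw [hfvk k h1 h2, hU, e.constr_basis, huvk k h1 h2]
  have hTU : ∀ k, T (U (e k)) = e k := by
    intro k
    rw [hU, e.constr_basis]
    by_cases h1 : k = i
    · subst h1
      rw [huvi, hui, map_add, map_smul, map_smul, hT, e.constr_basis, e.constr_basis,
        hfvi, hfvj, hfi, hfj]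
      match_scalars <;> linarith [hbez']
    by_cases h2 : k = j
    · subst h2
      rw [huvj, huj, map_add, map_smul, map_smul, hT, e.constr_basis, e.constr_basis,
        hfvi, hfvj, hfi, hfj]
      match_scalars <;> linarith [hbez']
    · rw [huvk k h1 h2, hT, e.constr_basis, hfvk k h1 h2]
  have hUT' : U.comp T = LinearMap.id := e.ext fun k => by simpa using hUT k
  have hTU' : T.comp U = LinearMap.id := e.ext fun k => by simpa using hTU k
  let Teq : F ≃ₗ[ℤ] F := LinearEquiv.ofLinear T U hTU' hUT'
  refine ⟨e.map Teq, ?_⟩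
  have h2 : a₀ * a j = b₀ * a i := by
    have h : g * (a₀ * a j) = g * (b₀ * a i) := by
      rw [← mul_assoc, ← mul_assoc, ha₀g, hb₀g]; ring
    exact mul_left_cancel₀ hgne h
  set l : ℤ := a i / Int.gcd (a i) (a j) * a j with hl
  have hll : l = a₀ * a j := by rw [hl, ha₀, hg]
  set a' : Fin n → ℤ := Function.update (Function.update a i (Int.gcd (a i) (a j))) j l
    with ha'
  have ha'i : a' i = g := by
    rw [ha', Function.update_of_ne hij, Function.update_self, hg]
  have ha'j : a' j = l := by rw [ha', Function.update_self]
  have ha'k : ∀ k, k ≠ i → k ≠ j → a' k = a k := by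
    intro k h1 h3
    rw [ha', Function.update_of_ne h3, Function.update_of_ne h1]
  have hmap : ∀ k, (e.map Teq) k = fv k := by
    intro k
    rw [Module.Basis.map_apply]
    show T (e k) = fv k
    rw [hT, e.constr_basis]
  -- key vector identities
  have G1 : g • fi = a i • e i + a j • e j := by
    rw [hfi]; match_scalars
    · linear_combination ha₀g
    · linear_combination hb₀g
  have G2 : l • fj = (-(b₀ * y)) • (a i • e i) + (a₀ * x) • (a j • e j) := by
    rw [hfj, hll]; match_scalars
    · linear_combination (-y) * h2
    · ring
  have G3 : a i • e i = (a₀ * x) • (g • fi) + (-1 : ℤ) • (l • fj) := by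
    rw [hfi, hfj, hll]; match_scalars
    · linear_combination (-(a₀*x)-1) * ha₀g + (-a₀) * hbez
    · linear_combination (-(a₀*x)) * hb₀g
  have h2' : a₀ * a j = b₀ * a i := by rw [← hll]; exact h2
  have G4 : a j • e j = (b₀ * y) • (g • fi) + (1 : ℤ) • (l • fj) := by
    rw [hfi, hfj, hll]; match_scalars
    · linear_combination -(b₀*y) * hb₀g - (a j) * hbez'
    · linear_combination -(b₀*y) * ha₀g + y * h2'
  apply le_antisymm
  · rw [Submodule.span_le]
    rintro _ ⟨k, rfl⟩
    simp only [hmap]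
    by_cases h1 : k = i
    · subst h1
      rw [ha'i, hfvi, G1]
      exact add_mem (Submodule.subset_span (Set.mem_range_self _))
        (Submodule.subset_span (Set.mem_range_self _))
    by_cases h3 : k = j
    · subst h3
      rw [ha'j, hfvj, G2]
      exact add_mem
        (Submodule.smul_mem _ _ (Submodule.subset_span (Set.mem_range_self _)))
        (Submodule.smul_mem _ _ (Submodule.subset_span (Set.mem_range_self _)))
    · rw [ha'k k h1 h3, hfvk k h1 h3]
      exact Submodule.subset_span (Set.mem_range_self _)
  · rw [Submodule.span_le]
    rintro _ ⟨k, rfl⟩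
    dsimp only
    have mi : g • fi ∈ Submodule.span ℤ (Set.range fun k => a' k • (e.map Teq) k) := by
      have : g • fi = a' i • (e.map Teq) i := by rw [ha'i, hmap, hfvi]
      rw [this]; exact Submodule.subset_span (Set.mem_range_self _)
    have mj : l • fj ∈ Submodule.span ℤ (Set.range fun k => a' k • (e.map Teq) k) := by
      have : l • fj = a' j • (e.map Teq) j := by rw [ha'j, hmap, hfvj]
      rw [this]; exact Submodule.subset_span (Set.mem_range_self _)
    by_cases h1 : k = i
    · subst h1
      rw [G3]
      exact add_mem (Submodule.smul_mem _ _ mi) (Submodule.smul_mem _ _ mj)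
    by_cases h3 : k = j
    · subst h3
      rw [G4]
      exact add_mem (Submodule.smul_mem _ _ mi) (Submodule.smul_mem _ _ mj)
    · have : a k • e k = a' k • (e.map Teq) k := by rw [ha'k k h1 h3, hmap, hfvk k h1 h3]
      rw [this]
      exact Submodule.subset_span (Set.mem_range_self _)

noncomputable def OmegaZ (z : ℤ) : ℕ := ArithmeticFunction.cardFactors z.natAbs

lemma OmegaZ_mul {x y : ℤ} (hx : x ≠ 0) (hy : y ≠ 0) :
    OmegaZ (x * y) = OmegaZ x + OmegaZ y := by
  unfold OmegaZ
  rw [Int.natAbs_mul]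
  exact ArithmeticFunction.cardFactors_mul (Int.natAbs_ne_zero.mpr hx)
    (Int.natAbs_ne_zero.mpr hy)

lemma OmegaZ_pos {x : ℤ} (hx : x ≠ 0) (hx1 : x.natAbs ≠ 1) : 1 ≤ OmegaZ x := by
  by_contra h
  push_neg at h
  interval_cases h' : OmegaZ x
  · unfold OmegaZ at h'
    rw [ArithmeticFunction.cardFactors_apply, List.length_eq_zero_iff] at h'
    rcases (Nat.primeFactorsList_eq_nil _).mp h' with h0 | h1
    · exact hx (Int.natAbs_eq_zero.mp h0)
    · exact hx1 h1

lemma chainFix {F : Type*} [AddCommGroup F] {n : ℕ} :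
    ∀ (Φ : ℕ) (e : Module.Basis (Fin n) ℤ F) (a : Fin n → ℤ),
      (∀ k, a k ≠ 0) → (∑ k : Fin n, (n - k.val) * OmegaZ (a k)) ≤ Φ →
      ∃ (e' : Module.Basis (Fin n) ℤ F) (a' : Fin n → ℤ), (∀ k, a' k ≠ 0) ∧
        (∀ i j : Fin n, i ≤ j → a' i ∣ a' j) ∧
        Submodule.span ℤ (Set.range fun k => a' k • e' k) =
          Submodule.span ℤ (Set.range fun k => a k • e k) := by
  intro Φ
  induction Φ using Nat.strong_induction_on with
  | _ Φ IH =>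
  intro e a ha hΦ
  by_cases hbad : ∃ p : Fin n × Fin n, p.1 < p.2 ∧ ¬ a p.1 ∣ a p.2
  · obtain ⟨⟨i, j⟩, hij, hnd⟩ := hbad
    have hne : i ≠ j := ne_of_lt hij
    set g : ℤ := (Int.gcd (a i) (a j) : ℤ) with hg
    have hgd : g ∣ a i := Int.gcd_dvd_left _ _
    have hgne : g ≠ 0 := by
      have : Int.gcd (a i) (a j) ≠ 0 := fun h => ha i (Int.gcd_eq_zero_iff.mp h).1
      rw [hg]; exact_mod_cast this
    set c : ℤ := a i / g with hc
    have hcg : g * c = a i := Int.mul_ediv_cancel' hgd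
    have hcne : c ≠ 0 := by
      intro h0; apply ha i; rw [← hcg, h0, mul_zero]
    have hc1 : c.natAbs ≠ 1 := by
      intro h1
      rcases Int.isUnit_iff.mp (Int.isUnit_iff_natAbs_eq.mpr h1) with h | h
      · apply hnd; rw [← hcg, h, mul_one]; exact Int.gcd_dvd_right _ _
      · apply hnd
        have hai : a i = -g := by rw [← hcg, h]; ring
        rw [hai]
        exact (Int.neg_dvd).mpr (Int.gcd_dvd_right _ _)
    have hΩ : OmegaZ (a i) = OmegaZ g + OmegaZ c := by
      rw [← hcg, OmegaZ_mul hgne hcne]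
    have hΩc : 1 ≤ OmegaZ c := OmegaZ_pos hcne hc1
    obtain ⟨e'', hspan''⟩ := pairFix e a i j hne (ha i)
    set a'' : Fin n → ℤ :=
      Function.update (Function.update a i (Int.gcd (a i) (a j))) j
        ((a i / Int.gcd (a i) (a j)) * a j) with ha''
    have ha''i : a'' i = g := by
      rw [ha'', Function.update_of_ne hne, Function.update_self, hg]
    have ha''j : a'' j = c * a j := by
      rw [ha'', Function.update_self, hc, hg]
    have ha''k : ∀ k, k ≠ i → k ≠ j → a'' k = a k := by
      intro k h1 h3
      rw [ha'', Function.update_of_ne h3, Function.update_of_ne h1]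
    have ha''ne : ∀ k, a'' k ≠ 0 := by
      intro k
      by_cases h1 : k = i
      · subst h1; rw [ha''i]; exact hgne
      by_cases h3 : k = j
      · subst h3; rw [ha''j]; exact mul_ne_zero hcne (ha _)
      · rw [ha''k k h1 h3]; exact ha k
    -- measure decreases
    have hmeas : (∑ k : Fin n, (n - k.val) * OmegaZ (a'' k)) <
        (∑ k : Fin n, (n - k.val) * OmegaZ (a k)) := by
      have hsub : ({i, j} : Finset (Fin n)) ⊆ Finset.univ := Finset.subset_univ _
      have key : ∀ b : Fin n → ℤ, (∑ k : Fin n, (n - k.val) * OmegaZ (b k)) =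
          (∑ k ∈ Finset.univ \ {i, j}, (n - k.val) * OmegaZ (b k)) +
            ((n - i.val) * OmegaZ (b i) + (n - j.val) * OmegaZ (b j)) := by
        intro b
        rw [← Finset.sum_sdiff hsub, Finset.sum_pair hne]
      rw [key a'', key a]
      have hrest : (∑ k ∈ Finset.univ \ {i, j}, (n - k.val) * OmegaZ (a'' k)) =
          (∑ k ∈ Finset.univ \ {i, j}, (n - k.val) * OmegaZ (a k)) := by
        apply Finset.sum_congr rfl
        intro k hk
        simp only [Finset.mem_sdiff, Finset.mem_insert, Finset.mem_singleton] at hk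
        rw [ha''k k (fun h => hk.2 (Or.inl h)) (fun h => hk.2 (Or.inr h))]
      rw [hrest]
      apply Nat.add_lt_add_left
      rw [ha''i, ha''j, OmegaZ_mul hcne (ha j), hΩ]
      have hwlt : (n - j.val) < (n - i.val) := by
        have := j.isLt
        have := i.isLt
        have : i.val < j.val := hij
        omega
      have h5 : (n - j.val) * OmegaZ c < (n - i.val) * OmegaZ c :=
        mul_lt_mul_of_pos_right hwlt (by omega)
      calc (n - i.val) * OmegaZ g + (n - j.val) * (OmegaZ c + OmegaZ (a j))
          = ((n - i.val) * OmegaZ g + (n - j.val) * OmegaZ (a j)) +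
              (n - j.val) * OmegaZ c := by ring
        _ < ((n - i.val) * OmegaZ g + (n - j.val) * OmegaZ (a j)) +
              (n - i.val) * OmegaZ c := by omega
        _ = (n - i.val) * (OmegaZ g + OmegaZ c) + (n - j.val) * OmegaZ (a j) := by ring
    obtain ⟨e', a', hne', hchain', hspan'⟩ :=
      IH (∑ k : Fin n, (n - k.val) * OmegaZ (a'' k)) (lt_of_lt_of_le hmeas hΦ)
        e'' a'' ha''ne le_rfl
    exact ⟨e', a', hne', hchain', hspan'.trans hspan''⟩
  · push_neg at hbad
    refine ⟨e, a, ha, ?_, rfl⟩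
    intro i j hij
    rcases eq_or_lt_of_le hij with h | h
    · rw [show i = j from h]
    · by_contra hnd
      exact hnd (hbad (i, j) h)

set_option maxHeartbeats 1000000 in
lemma snf_full (d n : ℕ) (hd : 0 < d) (N : Submodule ℤ (Fin n → ℤ))
    (hdN : ∀ x : Fin n → ℤ, (d : ℤ) • x ∈ N) :
    ∃ (e : Module.Basis (Fin n) ℤ (Fin n → ℤ)) (a : Fin n → ℤ), (∀ k, a k ≠ 0) ∧
      Submodule.span ℤ (Set.range fun k => a k • e k) = N := by
  obtain ⟨m, snf⟩ := N.smithNormalForm (Pi.basisFun ℤ (Fin n))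
  rcases snf with ⟨bM, bN, femb, aa, hsnf⟩
  have hmn : m ≤ n := by
    simpa using Fintype.card_le_of_embedding femb
  have hdne : (d : ℤ) ≠ 0 := by exact_mod_cast hd.ne'
  have hnm : n ≤ m := by
    let φ : (Fin n → ℤ) →ₗ[ℤ] N :=
      LinearMap.codRestrict N ((d : ℤ) • LinearMap.id) (fun x => hdN x)
    have hker : LinearMap.ker φ = ⊥ := by
      rw [LinearMap.ker_codRestrict]
      exact LinearMap.ker_eq_bot.mpr (smul_right_injective _ hdne)
    have hlv := (Pi.basisFun ℤ (Fin n)).linearIndependent.map' φ hker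
    simpa using bN.card_le_card_of_linearIndependent hlv
  have hmeq : m = n := le_antisymm hmn hnm
  subst hmeq
  have hbij : Function.Bijective femb := (Finite.injective_iff_bijective).mp femb.injective
  set σ : Fin m ≃ Fin m := Equiv.ofBijective femb hbij with hσ
  refine ⟨bM, fun k => aa (σ.symm k), ?_, ?_⟩
  · intro k h0
    replace h0 : aa (σ.symm k) = 0 := h0
    have h := hsnf (σ.symm k)
    rw [h0, zero_smul] at h
    exact Module.Basis.ne_zero bN (σ.symm k) (Subtype.coe_injective (h.trans rfl))
  · have hfun : (fun k => aa (σ.symm k) • bM k) =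
        (fun i => ((bN i : (Fin m → ℤ)))) ∘ σ.symm := by
      funext k
      have h1 : femb (σ.symm k) = k := σ.apply_symm_apply k
      simp only [Function.comp_apply, hsnf (σ.symm k), h1]
    rw [hfun, Function.Surjective.range_comp σ.symm.surjective]
    have : Set.range (fun i => ((bN i : (Fin m → ℤ)))) = N.subtype '' Set.range bN := by
      rw [← Set.range_comp]; rfl
    rw [this, ← Submodule.map_span, bN.span_eq, Submodule.map_subtype_top]

lemma coord_span_smul_dvd {R F : Type*} [CommRing R] [AddCommGroup F] [Module R F] {n : ℕ}
    (e : Module.Basis (Fin n) R F) (c : Fin n → R) (x : F)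
    (hx : x ∈ Submodule.span R (Set.range fun k => c k • e k)) (k : Fin n) :
    c k ∣ e.repr x k := by
  obtain ⟨y, hy⟩ := (mem_span_range_iff_exists_fun R).mp hx
  refine ⟨y k, ?_⟩
  rw [← hy, map_sum]
  rw [Finsupp.finset_sum_apply, Finset.sum_eq_single k]
  · simp [Module.Basis.repr_self, mul_comm]
  · intro l _ hlk
    simp [Module.Basis.repr_self, Finsupp.single_apply, hlk]
  · simp


lemma nsmul_mod {Q : Type*} [AddCommMonoid Q] {pn : ℕ} (z : Q) (hz : pn • z = 0) (k : ℕ) :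
    k • z = (k % pn) • z := by
  conv_lhs => rw [← Nat.mod_add_div k pn]
  rw [add_nsmul, mul_comm, mul_nsmul, smul_comm, hz, smul_zero, add_zero]

lemma card_le_of_spans {d : ℕ} [NeZero d] {Q : Type*} [AddCommGroup Q] [Module (ZMod d) Q] [Finite Q]
    {r pn : ℕ} [NeZero pn] (hQp : ∀ z : Q, pn • z = 0) (g : Fin r → Q)
    (hg : Submodule.span (ZMod d) (Set.range g) = ⊤) : Nat.card Q ≤ pn ^ r := by
  have hψ : Function.Surjective (fun x : Fin r → ZMod pn => ∑ t, (x t).val • g t) := by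
    intro q
    have hq : q ∈ Submodule.span (ZMod d) (Set.range g) := by rw [hg]; trivial
    obtain ⟨y, hy⟩ := (mem_span_range_iff_exists_fun _).mp hq
    refine ⟨fun t => ((y t).val : ZMod pn), ?_⟩
    rw [← hy]
    apply Finset.sum_congr rfl
    intro t _
    rw [ZMod.val_natCast, ← nsmul_mod _ (hQp (g t)), ← Nat.cast_smul_eq_nsmul (ZMod d),
      ZMod.natCast_val, ZMod.cast_id]
  calc Nat.card Q ≤ Nat.card (Fin r → ZMod pn) := Nat.card_le_card_of_surjective _ hψ
    _ = pn ^ r := by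
        rw [Nat.card_pi]
        simp [Nat.card_zmod]


lemma vanishing {d n r : ℕ} [NeZero d] (f : Module.Basis (Fin n) (ZMod d) (Fin n → ZMod d))
    (c : Fin n → ℤ) (M : Submodule (ZMod d) (Fin n → ZMod d))
    (hchain : ∀ i j : Fin n, i ≤ j → c i ∣ c j)
    (hcd : ∀ k, c k ∣ (d : ℤ))
    (hMspan : Submodule.span (ZMod d)
      (Set.range fun k => ((c k : ℤ) : ZMod d) • f k) = M)
    (g : Fin r → (Fin n → ZMod d))
    (hg : Submodule.span (ZMod d) (Set.range g) = M)
    (k₀ : Fin n) (hk₀ : r ≤ k₀.val) (hbk₀ : ((c k₀ : ℤ) : ZMod d) ≠ 0) : False := by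
  obtain ⟨t, ht⟩ := hcd k₀
  have hck₀ : c k₀ ≠ 0 := fun h0 => hbk₀ (by rw [h0]; simp)
  have htne1 : t.natAbs ≠ 1 := by
    intro h1
    apply hbk₀
    rw [ZMod.intCast_zmod_eq_zero_iff_dvd]
    rcases Int.isUnit_iff.mp (Int.isUnit_iff_natAbs_eq.mpr h1) with h | h
    · rw [h, mul_one] at ht; exact ht ▸ dvd_refl _
    · rw [h] at ht
      exact ⟨-1, by linarith⟩
  obtain ⟨p, hp, hpt⟩ := Int.exists_prime_and_dvd htne1
  set pn : ℕ := p.natAbs with hpn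
  have hpnp : Nat.Prime pn := Int.prime_iff_natAbs_prime.mp hp
  haveI : NeZero pn := ⟨hpnp.pos.ne'⟩
  set m : ℕ := k₀.val + 1 with hm
  have hmn : m ≤ n := k₀.isLt
  have hrm : r < m := by omega
  set emb : Fin m → Fin n := Fin.castLE hmn with hemb
  have hembk₀ : ∀ j : Fin m, emb j ≤ k₀ := by
    intro j
    have := j.isLt
    exact Fin.mk_le_mk.mpr (by omega) |>.trans_eq rfl
  -- membership facts
  have hgM : ∀ t', g t' ∈ M := fun t' => hg ▸ Submodule.subset_span (Set.mem_range_self t')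
  have hvM : ∀ k : Fin n, ((c k : ℤ) : ZMod d) • f k ∈ M := fun k =>
    hMspan ▸ Submodule.subset_span (Set.mem_range_self k)
  -- quotient Q = M / pn M
  set W : Submodule (ZMod d) M :=
    LinearMap.range ((pn : ZMod d) • (LinearMap.id : M →ₗ[ZMod d] M)) with hW
  haveI : Finite (M ⧸ W) := Finite.of_surjective _ (Submodule.Quotient.mk_surjective W)
  have hQp : ∀ z : M ⧸ W, pn • z = 0 := by
    intro z
    obtain ⟨w, rfl⟩ := Submodule.Quotient.mk_surjective W z
    rw [← Nat.cast_smul_eq_nsmul (ZMod d), ← Submodule.Quotient.mk_smul,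
      Submodule.Quotient.mk_eq_zero]
    exact ⟨w, rfl⟩
  -- upper bound
  have hup : Nat.card (M ⧸ W) ≤ pn ^ r := by
    apply card_le_of_spans (d := d) hQp (fun t' => Submodule.Quotient.mk ⟨g t', hgM t'⟩)
    have hgg : Submodule.span (ZMod d)
        (Set.range fun t' => (⟨g t', hgM t'⟩ : M)) = ⊤ := by
      apply Submodule.map_injective_of_injective (Submodule.injective_subtype M)
      rw [Submodule.map_span, ← Set.range_comp, Submodule.map_top, Submodule.range_subtype]
      have : (⇑M.subtype ∘ fun t' => (⟨g t', hgM t'⟩ : M)) = g := funext fun t' => rfl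
      rw [this, hg]
    have hcomp : (fun t' => Submodule.Quotient.mk (p := W) ⟨g t', hgM t'⟩) =
        ⇑W.mkQ ∘ (fun t' => (⟨g t', hgM t'⟩ : M)) := funext fun t' => rfl
    rw [hcomp, Set.range_comp, ← Submodule.map_span, hgg, Submodule.map_top,
      Submodule.range_mkQ]
  -- lower bound: injection
  set vv : Fin m → M := fun j => ⟨((c (emb j) : ℤ) : ZMod d) • f (emb j), hvM _⟩ with hvv
  set χ : (Fin m → ZMod pn) → (M ⧸ W) :=
    fun x => Submodule.Quotient.mk (∑ j, ((x j).val : ZMod d) • vv j) with hχ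
  have hχinj : Function.Injective χ := by
    intro x x' hxx
    rw [hχ] at hxx
    dsimp only at hxx
    rw [Submodule.Quotient.eq] at hxx
    obtain ⟨u, hu⟩ := hxx
    -- coerce equation to the ambient space
    have hamb : (∑ j, ((x j).val : ZMod d) • (((c (emb j) : ℤ) : ZMod d) • f (emb j)))
        - (∑ j, ((x' j).val : ZMod d) • (((c (emb j) : ℤ) : ZMod d) • f (emb j)))
        = (pn : ZMod d) • (u : Fin n → ZMod d) := by
      have := congrArg (Subtype.val) hu
      push_cast at this
      convert this.symm using 2 <;> simp [hvv]
    obtain ⟨y, hy⟩ := (mem_span_range_iff_exists_fun (ZMod d)).mp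
      (hMspan.symm ▸ u.2 : (u : Fin n → ZMod d) ∈ Submodule.span (ZMod d)
        (Set.range fun k => ((c k : ℤ) : ZMod d) • f k))
    funext j₀
    -- apply the j₀-th coordinate
    have hrepr := congrArg (fun v => f.repr v (emb j₀)) hamb
    rw [← hy] at hrepr
    have hembinj : Function.Injective emb := Fin.castLE_injective hmn
    have hcoordL : ∀ (xx : Fin m → ZMod pn),
        f.repr (∑ j, ((xx j).val : ZMod d) • (((c (emb j) : ℤ) : ZMod d) • f (emb j))) (emb j₀)
        = ((xx j₀).val : ZMod d) * ((c (emb j₀) : ℤ) : ZMod d) := by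
      intro xx
      rw [map_sum, Finsupp.finset_sum_apply, Finset.sum_eq_single j₀]
      · rw [map_smul, map_smul, Module.Basis.repr_self]
        simp
      · intro l _ hl
        rw [map_smul, map_smul, Module.Basis.repr_self]
        simp [Finsupp.single_apply, fun h => hl (hembinj h)]
        intro hem
        exact absurd (hembinj hem) hl
      · simp
    have hcoordR : f.repr ((pn : ZMod d) •
        (∑ k, y k • (((c k : ℤ) : ZMod d) • f k))) (emb j₀)
        = (pn : ZMod d) * (y (emb j₀) * ((c (emb j₀) : ℤ) : ZMod d)) := by
      rw [map_smul, map_sum, Finsupp.smul_apply, Finsupp.finset_sum_apply,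
        Finset.sum_eq_single (emb j₀)]
      · rw [map_smul, map_smul, Module.Basis.repr_self]
        simp [mul_assoc]
      · intro l _ hl
        rw [map_smul, map_smul, Module.Basis.repr_self]
        simp [Finsupp.single_apply, hl]
      · simp
    rw [map_sub, Finsupp.sub_apply, hcoordL x, hcoordL x', hcoordR] at hrepr
    -- lift to ℤ
    set Z : ℤ := ((x j₀).val : ℤ) - ((x' j₀).val : ℤ) - pn * ((y (emb j₀)).val : ℤ) with hZ
    have hZc : ((Z * c (emb j₀) : ℤ) : ZMod d) = 0 := by
      have hyv : ((((y (emb j₀)).val : ℕ) : ZMod d)) = y (emb j₀) :=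
        ZMod.natCast_rightInverse _
      rw [hZ]
      push_cast
      rw [hyv]
      linear_combination hrepr
    rw [ZMod.intCast_zmod_eq_zero_iff_dvd] at hZc
    -- divisibility chain
    obtain ⟨u₂, hu₂⟩ := hchain (emb j₀) k₀ (hembk₀ j₀)
    have hcj : c (emb j₀) ≠ 0 := by
      intro h0
      rw [h0, zero_mul] at hu₂
      exact hck₀ hu₂
    have hds : (d : ℤ) = c (emb j₀) * (u₂ * t) := by rw [ht, hu₂]; ring
    have hsZ : (u₂ * t) ∣ Z := by
      have h1 : c (emb j₀) * (u₂ * t) ∣ c (emb j₀) * Z := by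
        rw [← hds, mul_comm (c (emb j₀)) Z]; exact hZc
      exact (mul_dvd_mul_iff_left hcj).mp h1
    have hpZ : (pn : ℤ) ∣ Z := by
      rw [hpn]
      rw [Int.natAbs_dvd]
      exact hpt.trans (dvd_mul_left t u₂) |>.trans hsZ
    have hpdiff : (pn : ℤ) ∣ ((x j₀).val : ℤ) - ((x' j₀).val : ℤ) := by
      have h2 : (pn : ℤ) ∣ (pn : ℤ) * ((y (emb j₀)).val : ℤ) := dvd_mul_right _ _
      have := dvd_add hpZ h2
      rw [hZ] at this
      rwa [sub_add_cancel] at this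
    have : ((x j₀).val : ZMod pn) = ((x' j₀).val : ZMod pn) := by
      rw [← sub_eq_zero]
      push_cast
      rw [← Int.cast_natCast (R := ZMod pn), ← Int.cast_natCast (R := ZMod pn) ((x' j₀).val),
        ← Int.cast_sub, ZMod.intCast_zmod_eq_zero_iff_dvd]
      exact hpdiff
    calc x j₀ = (((x j₀).val : ℕ) : ZMod pn) := (ZMod.natCast_rightInverse _).symm
      _ = (((x' j₀).val : ℕ) : ZMod pn) := this
      _ = x' j₀ := ZMod.natCast_rightInverse _
  have hlow : pn ^ m ≤ Nat.card (M ⧸ W) := by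
    calc pn ^ m = Nat.card (Fin m → ZMod pn) := by
          rw [Nat.card_pi]; simp [Nat.card_zmod]
      _ ≤ Nat.card (M ⧸ W) := Nat.card_le_card_of_injective χ hχinj
  have : pn ^ m ≤ pn ^ r := hlow.trans hup
  have hlt : pn ^ r < pn ^ m := Nat.pow_lt_pow_right hpnp.one_lt hrm
  omega

/-- Simple reduction: every rank-`r` submodule `M` of `(ℤ/dℤ)^n` admits a free basis
`f` of `(ℤ/dℤ)^n` and elements `b₁ ∣ b₂ ∣ ⋯ ∣ b_r` of `ℤ/dℤ` such that
`(b₁·f₁, …, b_r·f_r)` generates `M`. -/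
theorem stmt_9 (d n r : ℕ) (hd : 2 ≤ d) (hn : 1 ≤ n)
    (M : Submodule (ZMod d) (Fin n → ZMod d))
    (hspan : ∃ g : Fin r → (Fin n → ZMod d),
      Submodule.span (ZMod d) (Set.range g) = M)
    (hmin : ∀ k : ℕ, (∃ g : Fin k → (Fin n → ZMod d),
      Submodule.span (ZMod d) (Set.range g) = M) → r ≤ k) :
    ∃ (hrn : r ≤ n) (f : Module.Basis (Fin n) (ZMod d) (Fin n → ZMod d))
      (b : Fin r → ZMod d),
      (∀ i j : Fin r, i ≤ j → b i ∣ b j) ∧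
      Submodule.span (ZMod d)
        (Set.range fun i : Fin r => b i • f (Fin.castLE hrn i)) = M := by
  haveI : NeZero d := ⟨by omega⟩
  set π : (Fin n → ℤ) →ₗ[ℤ] (Fin n → ZMod d) :=
    LinearMap.pi (fun i => (Algebra.linearMap ℤ (ZMod d)).comp (LinearMap.proj i)) with hπdef
  have hπ : ∀ (x : Fin n → ℤ) (k : Fin n), π x k = ((x k : ℤ) : ZMod d) := by
    intro x k; simp [hπdef, LinearMap.pi_apply]
  have hπsurj : Function.Surjective π := by
    intro y
    choose z hz using fun k => ZMod.intCast_surjective (n := d) (y k)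
    exact ⟨z, funext fun k => by rw [hπ]; exact hz k⟩
  set N : Submodule ℤ (Fin n → ℤ) := Submodule.comap π (M.restrictScalars ℤ) with hN
  have hdN : ∀ x : Fin n → ℤ, (d : ℤ) • x ∈ N := by
    intro x
    rw [hN, Submodule.mem_comap, map_smul]
    have : ((d : ℤ) : ZMod d) • π x = ((d : ℤ) • π x : Fin n → ZMod d) :=
      Int.cast_smul_eq_zsmul _ _ _
    rw [← this]
    have hz : ((d : ℤ) : ZMod d) = 0 := by exact_mod_cast ZMod.natCast_self d
    rw [hz, zero_smul]
    exact Submodule.zero_mem _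
  obtain ⟨e₁, a, hane, hspanN⟩ := snf_full d n (by omega) N hdN
  obtain ⟨e₂, c, hcne, hchain, hspanc⟩ :=
    chainFix (∑ k : Fin n, (n - k.val) * OmegaZ (a k)) e₁ a hane le_rfl
  have hspanN₂ : Submodule.span ℤ (Set.range fun k => c k • e₂ k) = N :=
    hspanc.trans hspanN
  have hcd : ∀ k, c k ∣ (d : ℤ) := by
    intro k
    have hmem : (d : ℤ) • e₂ k ∈ Submodule.span ℤ (Set.range fun k => c k • e₂ k) := by
      rw [hspanN₂]; exact hdN _
    have h := coord_span_smul_dvd e₂ c _ hmem k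
    rwa [map_smul, Module.Basis.repr_self, Finsupp.smul_single, smul_eq_mul, mul_one,
      Finsupp.single_eq_same] at h
  -- transfer basis to ZMod d
  set A : Matrix (Fin n) (Fin n) ℤ := (Pi.basisFun ℤ (Fin n)).toMatrix e₂ with hA
  set B : Matrix (Fin n) (Fin n) ℤ := e₂.toMatrix (Pi.basisFun ℤ (Fin n)) with hB
  have hAB : A * B = 1 := by
    rw [hA, hB, Module.Basis.toMatrix_mul_toMatrix_flip]
  have hBA : B * A = 1 := by
    rw [hA, hB, Module.Basis.toMatrix_mul_toMatrix_flip]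
  set A' : Matrix (Fin n) (Fin n) (ZMod d) := A.map (Int.cast : ℤ → ZMod d) with hA'
  set B' : Matrix (Fin n) (Fin n) (ZMod d) := B.map (Int.cast : ℤ → ZMod d) with hB'
  have hmapmul : ∀ (X Y : Matrix (Fin n) (Fin n) ℤ),
      (X * Y).map (Int.cast : ℤ → ZMod d) =
        X.map (Int.cast : ℤ → ZMod d) * Y.map (Int.cast : ℤ → ZMod d) := by
    intro X Y
    exact Matrix.map_mul (f := Int.castRingHom (ZMod d))
  have hAB' : A' * B' = 1 := by
    rw [hA', hB', ← hmapmul, hAB]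
    simp [Matrix.map_one]
  have hBA' : B' * A' = 1 := by
    rw [hA', hB', ← hmapmul, hBA]
    simp [Matrix.map_one]
  set Teq : (Fin n → ZMod d) ≃ₗ[ZMod d] (Fin n → ZMod d) :=
    LinearEquiv.ofLinear (Matrix.toLin' A') (Matrix.toLin' B')
      (by rw [← Matrix.toLin'_mul, hAB', Matrix.toLin'_one])
      (by rw [← Matrix.toLin'_mul, hBA', Matrix.toLin'_one]) with hTeq
  set f : Module.Basis (Fin n) (ZMod d) (Fin n → ZMod d) :=
    (Pi.basisFun (ZMod d) (Fin n)).map Teq with hfdef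
  have hf : ∀ k, f k = π (e₂ k) := by
    intro k
    rw [hfdef, Module.Basis.map_apply, Pi.basisFun_apply]
    show Matrix.toLin' A' (Pi.single k 1) = _
    funext i
    rw [Matrix.toLin'_apply, hπ]
    have h1 : A'.mulVec (Pi.single k 1) i = A' i k := by
      simp [Matrix.mulVec_single]
    rw [h1, hA', Matrix.map_apply, hA, Module.Basis.toMatrix_apply, Pi.basisFun_repr]
  set b : Fin n → ZMod d := fun k => ((c k : ℤ) : ZMod d) with hb
  have hbf : ∀ k, b k • f k = π (c k • e₂ k) := by
    intro k
    rw [map_smul, hf, hb]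
    exact Int.cast_smul_eq_zsmul _ _ _
  have hMspan : Submodule.span (ZMod d) (Set.range fun k => b k • f k) = M := by
    apply Submodule.restrictScalars_injective ℤ (ZMod d) _
    have hsur : Function.Surjective (algebraMap ℤ (ZMod d)) := by
      rw [algebraMap_int_eq]
      exact ZMod.intCast_surjective
    rw [Submodule.restrictScalars_span ℤ (ZMod d) hsur]
    have hrange : (Set.range fun k => b k • f k) =
        π '' (Set.range fun k => c k • e₂ k) := by
      have hcomp : (fun k => b k • f k) = ⇑π ∘ (fun k => c k • e₂ k) :=
        funext fun k => hbf k
      rw [hcomp, Set.range_comp]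
    rw [hrange, ← Submodule.map_span, hspanN₂, hN]
    apply Submodule.map_comap_eq_self
    rw [LinearMap.range_eq_top.mpr hπsurj]
    exact le_top
  have hrn : r ≤ n := hmin n ⟨fun k => b k • f k, hMspan⟩
  have hvan : ∀ k : Fin n, r ≤ k.val → b k = 0 := by
    intro k hk
    by_contra hne0
    obtain ⟨g, hg⟩ := hspan
    have hMspan' : Submodule.span (ZMod d)
        (Set.range fun k => ((c k : ℤ) : ZMod d) • f k) = M := by
      simpa only [hb] using hMspan
    exact vanishing f c M hchain hcd hMspan' g hg k hk hne0
  refine ⟨hrn, f, fun i => b (Fin.castLE hrn i), fun i j hij => ?_, ?_⟩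
  · exact map_dvd (Int.castRingHom (ZMod d))
      (hchain (Fin.castLE hrn i) (Fin.castLE hrn j) (by simpa using hij))
  · rw [← hMspan]
    apply le_antisymm
    · rw [Submodule.span_le]
      rintro _ ⟨i, rfl⟩
      exact Submodule.subset_span ⟨Fin.castLE hrn i, rfl⟩
    · rw [Submodule.span_le]
      rintro _ ⟨k, rfl⟩
      dsimp only
      by_cases hk : k.val < r
      · have hck : Fin.castLE hrn ⟨k.val, hk⟩ = k := Fin.ext rfl
        refine Submodule.subset_span ⟨⟨k.val, hk⟩, ?_⟩
        show b (Fin.castLE hrn ⟨k.val, hk⟩) • f (Fin.castLE hrn ⟨k.val, hk⟩) = b k • f k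
        rw [hck]
      · rw [hvan k (le_of_not_gt hk), zero_smul]
        exact Submodule.zero_mem _
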